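/- Let A ∈ ℝ with cos(Aπ) ≠ 0, let k > 0 with sin(kπ) ≠ 0, let (α_j)_{j∈ℤ} be real numbers, set ξ_j(k) = (1/cos(Aπ))(cos(kπ) + (α_j/(4k))·sin(kπ)), and let (a_j)_{j∈ℤ} be complex numbers satisfying a_{j+1} + a_{j−1} = 2·ξ_j(k)·a_j for all j ∈ ℤ. Define ψ, φ : ℝ → ℂ by setting, for x ∈ [jπ, (j+1)π): ψ(x) = e^{−iA(x−jπ)}·[ a_j·cos(k(x−jπ)) + (a_{j+1}e^{iAπ} − a_j·cos(kπ))·sin(k(x−jπ))/sin(kπ) ] and φ(x) = e^{iA(x−jπ)}·[ a_j·cos(k(x−jπ)) + (a_{j+1}e^{−iAπ} − a_j·cos(kπ))·sin(k(x−jπ))/sin(kπ) ]. Then ψ and φ are continuous on ℝ with ψ(jπ) = φ(jπ) = a_j for all j; on each open interval (jπ, (j+1)π) they satisfy ψ″ + 2iAψ′ + (k² − A²)ψ = 0 and φ″ − 2iAφ′ + (k² − A²)φ = 0; and at every j ∈ ℤ the one-sided derivatives exist and satisfy ψ′(jπ⁺) + φ′(jπ⁺) − ψ′(jπ⁻) −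 φ′(jπ⁻) = α_j·a_j. -/

import Mathlib

open scoped Real

/-- The upper-halfcircle component reconstructed on `[jπ, (j+1)π)` from vertex values. -/
noncomputable def psiRec (A k : ℝ) (a : ℤ → ℂ) (j : ℤ) (x : ℝ) : ℂ :=
  Complex.exp (-(Complex.I) * ((A * (x - (j : ℝ) * π) : ℝ) : ℂ)) *
    (a j * ((Real.cos (k * (x - (j : ℝ) * π)) : ℝ) : ℂ) +
      (a (j + 1) * Complex.exp (Complex.I * ((A * π : ℝ) : ℂ))
          - a j * ((Real.cos (k * π) : ℝ) : ℂ)) *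
        ((Real.sin (k * (x - (j : ℝ) * π)) / Real.sin (k * π) : ℝ) : ℂ))

/-- The lower-halfcircle component reconstructed on `[jπ, (j+1)π)` from vertex values. -/
noncomputable def phiRec (A k : ℝ) (a : ℤ → ℂ) (j : ℤ) (x : ℝ) : ℂ :=
  Complex.exp (Complex.I * ((A * (x - (j : ℝ) * π) : ℝ) : ℂ)) *
    (a j * ((Real.cos (k * (x - (j : ℝ) * π)) : ℝ) : ℂ) +
      (a (j + 1) * Complex.exp (-(Complex.I) * ((A * π : ℝ) : ℂ))
          - a j * ((Real.cos (k * π) : ℝ) : ℂ)) *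
        ((Real.sin (k * (x - (j : ℝ) * π)) / Real.sin (k * π) : ℝ) : ℂ))

noncomputable def gFun (μ k : ℝ) (B C : ℂ) (x : ℝ) : ℂ :=
  Complex.exp (Complex.I * μ * x) * (B * Complex.cos (k * x) + C * Complex.sin (k * x))

noncomputable def Bd (μ k : ℝ) (B C : ℂ) : ℂ := Complex.I * μ * B + k * C
noncomputable def Cd (μ k : ℝ) (B C : ℂ) : ℂ := Complex.I * μ * C - k * B

lemma hasDerivAt_gFun_shift (μ k : ℝ) (B C : ℂ) (c x : ℝ) :
    HasDerivAt (fun y => gFun μ k B C (y - c))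
      (gFun μ k (Bd μ k B C) (Cd μ k B C) (x - c)) x := by
  have hz : HasDerivAt (fun z : ℂ => z - (c:ℂ)) 1 (x:ℂ) := (hasDerivAt_id _).sub_const _
  have h := (((hz.const_mul (Complex.I * μ)).cexp).mul
    ((((hz.const_mul (k:ℂ)).ccos).const_mul B).add (((hz.const_mul (k:ℂ)).csin).const_mul C)))
  have h2 := h.comp_ofReal
  unfold gFun Bd Cd
  convert h2 using 1
  · funext y
    simp only [Pi.mul_apply, Pi.add_apply]
    push_cast
    ring_nf
  · simp only [Pi.mul_apply, Pi.add_apply]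
    push_cast
    ring

lemma gFun_zero (μ k : ℝ) (B C : ℂ) : gFun μ k B C 0 = B := by
  simp [gFun]

lemma gFun_ode (μ k : ℝ) (B C : ℂ) (u : ℝ) :
    gFun μ k (Bd μ k (Bd μ k B C) (Cd μ k B C)) (Cd μ k (Bd μ k B C) (Cd μ k B C)) u
      - 2 * Complex.I * μ * gFun μ k (Bd μ k B C) (Cd μ k B C) u
      + ((k:ℂ)^2 - (μ:ℂ)^2) * gFun μ k B C u = 0 := by
  unfold gFun Bd Cd
  linear_combination (-(μ:ℂ)^2 * Complex.exp (Complex.I*(μ:ℂ)*(u:ℂ)) *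
    (B * Complex.cos ((k:ℂ)*(u:ℂ)) + C * Complex.sin ((k:ℂ)*(u:ℂ)))) * Complex.I_sq

noncomputable def Cpsi (A k : ℝ) (a : ℤ → ℂ) (j : ℤ) : ℂ :=
  (a (j + 1) * Complex.exp (Complex.I * ((A * π : ℝ) : ℂ))
      - a j * ((Real.cos (k * π) : ℝ) : ℂ)) / ((Real.sin (k * π) : ℝ) : ℂ)

noncomputable def Cphi (A k : ℝ) (a : ℤ → ℂ) (j : ℤ) : ℂ :=
  (a (j + 1) * Complex.exp (-(Complex.I) * ((A * π : ℝ) : ℂ))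
      - a j * ((Real.cos (k * π) : ℝ) : ℂ)) / ((Real.sin (k * π) : ℝ) : ℂ)

lemma psiRec_eq (A k : ℝ) (a : ℤ → ℂ) (j : ℤ) (x : ℝ) :
    psiRec A k a j x = gFun (-A) k (a j) (Cpsi A k a j) (x - (j:ℝ)*π) := by
  unfold psiRec gFun Cpsi
  push_cast
  ring_nf

lemma phiRec_eq (A k : ℝ) (a : ℤ → ℂ) (j : ℤ) (x : ℝ) :
    phiRec A k a j x = gFun A k (a j) (Cphi A k a j) (x - (j:ℝ)*π) := by
  unfold phiRec gFun Cphi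
  push_cast
  ring_nf

lemma hasDerivAt_psiRec (A k : ℝ) (a : ℤ → ℂ) (j : ℤ) (x : ℝ) :
    HasDerivAt (psiRec A k a j)
      (gFun (-A) k (Bd (-A) k (a j) (Cpsi A k a j)) (Cd (-A) k (a j) (Cpsi A k a j))
        (x - (j:ℝ)*π)) x :=
  (hasDerivAt_gFun_shift (-A) k (a j) (Cpsi A k a j) ((j:ℝ)*π) x).congr_of_eventuallyEq
    (Filter.Eventually.of_forall (psiRec_eq A k a j))

lemma hasDerivAt_phiRec (A k : ℝ) (a : ℤ → ℂ) (j : ℤ) (x : ℝ) :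
    HasDerivAt (phiRec A k a j)
      (gFun A k (Bd A k (a j) (Cphi A k a j)) (Cd A k (a j) (Cphi A k a j))
        (x - (j:ℝ)*π)) x :=
  (hasDerivAt_gFun_shift A k (a j) (Cphi A k a j) ((j:ℝ)*π) x).congr_of_eventuallyEq
    (Filter.Eventually.of_forall (phiRec_eq A k a j))

lemma psiRec_vertex (A k : ℝ) (a : ℤ → ℂ) (j : ℤ) : psiRec A k a j ((j:ℝ)*π) = a j := by
  simp [psiRec]

lemma phiRec_vertex (A k : ℝ) (a : ℤ → ℂ) (j : ℤ) : phiRec A k a j ((j:ℝ)*π) = a j := by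
  simp [phiRec]

lemma psiRec_endpoint (A k : ℝ) (hks : Real.sin (k * π) ≠ 0) (a : ℤ → ℂ) (j : ℤ) :
    psiRec A k a j (((j:ℝ) + 1)*π) = a (j+1) := by
  unfold psiRec
  rw [show ((j:ℝ) + 1)*π - (j:ℝ)*π = π by ring, div_self hks]
  have hE : Complex.exp (-Complex.I * ((A:ℂ) * (π:ℂ))) * Complex.exp (Complex.I * ((A:ℂ) * (π:ℂ))) = 1 := by
    rw [← Complex.exp_add, show -Complex.I * ((A:ℂ) * (π:ℂ)) + Complex.I * ((A:ℂ) * (π:ℂ)) = 0 by ring,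
      Complex.exp_zero]
  push_cast
  linear_combination a (j+1) * hE

lemma phiRec_endpoint (A k : ℝ) (hks : Real.sin (k * π) ≠ 0) (a : ℤ → ℂ) (j : ℤ) :
    phiRec A k a j (((j:ℝ) + 1)*π) = a (j+1) := by
  unfold phiRec
  rw [show ((j:ℝ) + 1)*π - (j:ℝ)*π = π by ring, div_self hks]
  have hE : Complex.exp (Complex.I * ((A:ℂ) * (π:ℂ))) * Complex.exp (-Complex.I * ((A:ℂ) * (π:ℂ))) = 1 := by
    rw [← Complex.exp_add, show Complex.I * ((A:ℂ) * (π:ℂ)) + -Complex.I * ((A:ℂ) * (π:ℂ)) = 0 by ring,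
      Complex.exp_zero]
  push_cast
  linear_combination a (j+1) * hE

lemma delta_key (II Ak kk al E F c s CA a0 a1 am Cp Cq Cpm Cqm : ℂ)
    (hs : s ≠ 0)
    (hEF : E * F = 1) (hEcos : E + F = 2 * CA) (htrig : s ^ 2 + c ^ 2 = 1)
    (hCp : Cp * s = a1 * E - a0 * c) (hCq : Cq * s = a1 * F - a0 * c)
    (hCpm : Cpm * s = a0 * E - am * c) (hCqm : Cqm * s = a0 * F - am * c)
    (hrec : CA * (a1 + am) * (2 * kk) = (4 * kk * c + al * s) * a0) :
    (-(II * Ak) * a0 + kk * Cp) + (II * Ak * a0 + kk * Cq)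
      - F * ((-(II * Ak) * am + kk * Cpm) * c + (-(II * Ak) * Cpm - kk * am) * s)
      - E * ((II * Ak * am + kk * Cqm) * c + (II * Ak * Cqm - kk * am) * s)
      = al * a0 := by
  have key : s * ((-(II * Ak) * a0 + kk * Cp) + (II * Ak * a0 + kk * Cq)
      - F * ((-(II * Ak) * am + kk * Cpm) * c + (-(II * Ak) * Cpm - kk * am) * s)
      - E * ((II * Ak * am + kk * Cqm) * c + (II * Ak * Cqm - kk * am) * s))
      = s * (al * a0) := by
    linear_combination kk * hCp + kk * hCq
      + (II * Ak * s * F - kk * c * F) * hCpm + (-(kk * c * E) - II * Ak * s * E) * hCqm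
      + (-2 * kk * a0 * c) * hEF + (kk * am * (E + F)) * htrig
      + (kk * (a1 + am)) * hEcos + hrec
  exact mul_left_cancel₀ hs key

/-- duality, converse direction.  Any solution `(a_j)` of the difference
equation `a_{j+1} + a_{j−1} = 2ξ_j(k)a_j` gives, via the explicit formulas, functions
`ψ, φ` that are continuous, take the values `a_j` at the vertices, satisfy the gauged
eigenvalue equations at energy `k²` on each interval `(jπ, (j+1)π)`, and have one-sided
derivatives at each vertex satisfying the `δ`-coupling of strength `α_j`. -/
theorem duality_converse (A : ℝ) (hA : Real.cos (A * π) ≠ 0) (k : ℝ) (hk : 0 < k)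
    (hks : Real.sin (k * π) ≠ 0) (α : ℤ → ℝ) (a : ℤ → ℂ)
    (ha : ∀ j : ℤ, a (j + 1) + a (j - 1)
      = 2 * (((1 / Real.cos (A * π))
          * (Real.cos (k * π) + α j / (4 * k) * Real.sin (k * π)) : ℝ) : ℂ) * a j)
    (ψ φ : ℝ → ℂ)
    (hψ : ∀ j : ℤ, ∀ x ∈ Set.Ico ((j : ℝ) * π) (((j : ℝ) + 1) * π), ψ x = psiRec A k a j x)
    (hφ : ∀ j : ℤ, ∀ x ∈ Set.Ico ((j : ℝ) * π) (((j : ℝ) + 1) * π), φ x = phiRec A k a j x) :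
    Continuous ψ ∧ Continuous φ ∧
    (∀ j : ℤ, ψ ((j : ℝ) * π) = a j ∧ φ ((j : ℝ) * π) = a j) ∧
    (∀ j : ℤ, ∀ x ∈ Set.Ioo ((j : ℝ) * π) (((j : ℝ) + 1) * π),
      DifferentiableAt ℝ ψ x ∧ DifferentiableAt ℝ (deriv ψ) x ∧
      deriv (deriv ψ) x + 2 * Complex.I * (A : ℂ) * deriv ψ x
        + ((k ^ 2 - A ^ 2 : ℝ) : ℂ) * ψ x = 0 ∧
      DifferentiableAt ℝ φ x ∧ DifferentiableAt ℝ (deriv φ) x ∧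
      deriv (deriv φ) x - 2 * Complex.I * (A : ℂ) * deriv φ x
        + ((k ^ 2 - A ^ 2 : ℝ) : ℂ) * φ x = 0) ∧
    (∀ j : ℤ, ∃ dψp dψm dφp dφm : ℂ,
      HasDerivWithinAt ψ dψp (Set.Ioi ((j : ℝ) * π)) ((j : ℝ) * π) ∧
      HasDerivWithinAt ψ dψm (Set.Iio ((j : ℝ) * π)) ((j : ℝ) * π) ∧
      HasDerivWithinAt φ dφp (Set.Ioi ((j : ℝ) * π)) ((j : ℝ) * π) ∧
      HasDerivWithinAt φ dφm (Set.Iio ((j : ℝ) * π)) ((j : ℝ) * π) ∧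
      dψp + dφp - dψm - dφm = (α j : ℂ) * a j) := by
  have hpi := Real.pi_pos
  have hlt : ∀ j : ℤ, (j:ℝ)*π < ((j:ℝ)+1)*π := fun j => by nlinarith
  have hmem : ∀ j : ℤ, (j:ℝ)*π ∈ Set.Ico ((j:ℝ)*π) (((j:ℝ)+1)*π) := fun j =>
    ⟨le_refl _, hlt j⟩
  have hvert : ∀ j : ℤ, ψ ((j:ℝ)*π) = a j ∧ φ ((j:ℝ)*π) = a j := fun j =>
    ⟨by rw [hψ j _ (hmem j), psiRec_vertex], by rw [hφ j _ (hmem j), phiRec_vertex]⟩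
  -- closed-interval versions
  have hψIcc : ∀ j : ℤ, ∀ x : ℝ, (j:ℝ)*π ≤ x → x ≤ ((j:ℝ)+1)*π → ψ x = psiRec A k a j x := by
    intro j x h1 h2
    rcases h2.lt_or_eq with h2 | h2
    · exact hψ j x ⟨h1, h2⟩
    · rw [h2, psiRec_endpoint A k hks a j]
      have e1 : ((j:ℝ)+1)*π = (((j+1 : ℤ)):ℝ)*π := by push_cast; ring
      rw [e1, hψ (j+1) _ (hmem (j+1)), psiRec_vertex]
  have hφIcc : ∀ j : ℤ, ∀ x : ℝ, (j:ℝ)*π ≤ x → x ≤ ((j:ℝ)+1)*π → φ x = phiRec A k a j x := by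
    intro j x h1 h2
    rcases h2.lt_or_eq with h2 | h2
    · exact hφ j x ⟨h1, h2⟩
    · rw [h2, phiRec_endpoint A k hks a j]
      have e1 : ((j:ℝ)+1)*π = (((j+1 : ℤ)):ℝ)*π := by push_cast; ring
      rw [e1, hφ (j+1) _ (hmem (j+1)), phiRec_vertex]
  -- locating a point
  have hloc : ∀ x : ℝ, ∃ j : ℤ, (j:ℝ)*π ≤ x ∧ x < ((j:ℝ)+1)*π := by
    intro x
    refine ⟨⌊x/π⌋, ?_, ?_⟩
    · exact (le_div_iff₀ hpi).1 (Int.floor_le _)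
    · exact (div_lt_iff₀ hpi).1 (Int.lt_floor_add_one _)
  -- eventual equality on open intervals
  have hψopen : ∀ j : ℤ, ∀ x ∈ Set.Ioo ((j:ℝ)*π) (((j:ℝ)+1)*π),
      ψ =ᶠ[nhds x] psiRec A k a j := by
    intro j x hx
    filter_upwards [Ioo_mem_nhds hx.1 hx.2] with y hy
    exact hψ j y ⟨hy.1.le, hy.2⟩
  have hφopen : ∀ j : ℤ, ∀ x ∈ Set.Ioo ((j:ℝ)*π) (((j:ℝ)+1)*π),
      φ =ᶠ[nhds x] phiRec A k a j := by
    intro j x hx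
    filter_upwards [Ioo_mem_nhds hx.1 hx.2] with y hy
    exact hφ j y ⟨hy.1.le, hy.2⟩
  -- first derivatives on open intervals
  have hd1ψ : ∀ j : ℤ, ∀ x ∈ Set.Ioo ((j:ℝ)*π) (((j:ℝ)+1)*π),
      HasDerivAt ψ (gFun (-A) k (Bd (-A) k (a j) (Cpsi A k a j))
        (Cd (-A) k (a j) (Cpsi A k a j)) (x - (j:ℝ)*π)) x :=
    fun j x hx => (hasDerivAt_psiRec A k a j x).congr_of_eventuallyEq (hψopen j x hx)
  have hd1φ : ∀ j : ℤ, ∀ x ∈ Set.Ioo ((j:ℝ)*π) (((j:ℝ)+1)*π),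
      HasDerivAt φ (gFun A k (Bd A k (a j) (Cphi A k a j))
        (Cd A k (a j) (Cphi A k a j)) (x - (j:ℝ)*π)) x :=
    fun j x hx => (hasDerivAt_phiRec A k a j x).congr_of_eventuallyEq (hφopen j x hx)
  -- second derivatives on open intervals
  have hd2ψ : ∀ j : ℤ, ∀ x ∈ Set.Ioo ((j:ℝ)*π) (((j:ℝ)+1)*π),
      HasDerivAt (deriv ψ)
        (gFun (-A) k
          (Bd (-A) k (Bd (-A) k (a j) (Cpsi A k a j)) (Cd (-A) k (a j) (Cpsi A k a j)))
          (Cd (-A) k (Bd (-A) k (a j) (Cpsi A k a j)) (Cd (-A) k (a j) (Cpsi A k a j)))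
          (x - (j:ℝ)*π)) x := by
    intro j x hx
    refine (hasDerivAt_gFun_shift (-A) k _ _ ((j:ℝ)*π) x).congr_of_eventuallyEq ?_
    filter_upwards [Ioo_mem_nhds hx.1 hx.2] with y hy
    exact (hd1ψ j y hy).deriv
  have hd2φ : ∀ j : ℤ, ∀ x ∈ Set.Ioo ((j:ℝ)*π) (((j:ℝ)+1)*π),
      HasDerivAt (deriv φ)
        (gFun A k
          (Bd A k (Bd A k (a j) (Cphi A k a j)) (Cd A k (a j) (Cphi A k a j)))
          (Cd A k (Bd A k (a j) (Cphi A k a j)) (Cd A k (a j) (Cphi A k a j)))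
          (x - (j:ℝ)*π)) x := by
    intro j x hx
    refine (hasDerivAt_gFun_shift A k _ _ ((j:ℝ)*π) x).congr_of_eventuallyEq ?_
    filter_upwards [Ioo_mem_nhds hx.1 hx.2] with y hy
    exact (hd1φ j y hy).deriv
  -- continuity
  have hcψ : Continuous ψ := by
    rw [continuous_iff_continuousAt]
    intro x
    obtain ⟨j, h1, h2⟩ := hloc x
    rcases h1.lt_or_eq with h1' | heq
    · exact (hd1ψ j x ⟨h1', h2⟩).continuousAt
    · rw [← heq] at h2 ⊢
      rw [continuousAt_iff_continuous_left_right]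
      constructor
      · have e1 : ((j-1 : ℤ):ℝ) = (j:ℝ) - 1 := by push_cast; ring
        have e2 : (((j-1 : ℤ):ℝ)+1)*π = (j:ℝ)*π := by push_cast; ring
        have hlow : ((j:ℝ)-1)*π < (j:ℝ)*π := by nlinarith
        refine ((hasDerivAt_psiRec A k a (j-1) ((j:ℝ)*π)).continuousAt.continuousWithinAt).congr_of_eventuallyEq ?_ ?_
        · filter_upwards [nhdsWithin_le_nhds (Ioi_mem_nhds hlow), self_mem_nhdsWithin]
            with y hy1 hy2
          exact hψIcc (j-1) y (by rw [e1]; exact (le_of_lt hy1)) (by rw [e2]; exact hy2)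
        · exact hψIcc (j-1) _ (by rw [e1]; nlinarith) (by rw [e2])
      · refine ((hasDerivAt_psiRec A k a j ((j:ℝ)*π)).continuousAt.continuousWithinAt).congr_of_eventuallyEq ?_ ?_
        · filter_upwards [nhdsWithin_le_nhds (Iio_mem_nhds h2), self_mem_nhdsWithin]
            with y hy1 hy2
          exact hψ j y ⟨hy2, hy1⟩
        · exact hψ j _ (hmem j)
  have hcφ : Continuous φ := by
    rw [continuous_iff_continuousAt]
    intro x
    obtain ⟨j, h1, h2⟩ := hloc x
    rcases h1.lt_or_eq with h1' | heq
    · exact (hd1φ j x ⟨h1', h2⟩).continuousAt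
    · rw [← heq] at h2 ⊢
      rw [continuousAt_iff_continuous_left_right]
      constructor
      · have e1 : ((j-1 : ℤ):ℝ) = (j:ℝ) - 1 := by push_cast; ring
        have e2 : (((j-1 : ℤ):ℝ)+1)*π = (j:ℝ)*π := by push_cast; ring
        have hlow : ((j:ℝ)-1)*π < (j:ℝ)*π := by nlinarith
        refine ((hasDerivAt_phiRec A k a (j-1) ((j:ℝ)*π)).continuousAt.continuousWithinAt).congr_of_eventuallyEq ?_ ?_
        · filter_upwards [nhdsWithin_le_nhds (Ioi_mem_nhds hlow), self_mem_nhdsWithin]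
            with y hy1 hy2
          exact hφIcc (j-1) y (by rw [e1]; exact (le_of_lt hy1)) (by rw [e2]; exact hy2)
        · exact hφIcc (j-1) _ (by rw [e1]; nlinarith) (by rw [e2])
      · refine ((hasDerivAt_phiRec A k a j ((j:ℝ)*π)).continuousAt.continuousWithinAt).congr_of_eventuallyEq ?_ ?_
        · filter_upwards [nhdsWithin_le_nhds (Iio_mem_nhds h2), self_mem_nhdsWithin]
            with y hy1 hy2
          exact hφ j y ⟨hy2, hy1⟩
        · exact hφ j _ (hmem j)
  refine ⟨hcψ, hcφ, hvert, ?_, ?_⟩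
  · -- ODE part
    intro j x hx
    have hm : x ∈ Set.Ico ((j:ℝ)*π) (((j:ℝ)+1)*π) := ⟨hx.1.le, hx.2⟩
    refine ⟨(hd1ψ j x hx).differentiableAt, (hd2ψ j x hx).differentiableAt, ?_,
      (hd1φ j x hx).differentiableAt, (hd2φ j x hx).differentiableAt, ?_⟩
    · rw [(hd2ψ j x hx).deriv, (hd1ψ j x hx).deriv, hψ j x hm, psiRec_eq]
      have h0 := gFun_ode (-A) k (a j) (Cpsi A k a j) (x - (j:ℝ)*π)
      push_cast at h0 ⊢
      linear_combination h0
    · rw [(hd2φ j x hx).deriv, (hd1φ j x hx).deriv, hφ j x hm, phiRec_eq]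
      have h0 := gFun_ode A k (a j) (Cphi A k a j) (x - (j:ℝ)*π)
      push_cast at h0 ⊢
      linear_combination h0
  · -- δ-coupling
    intro j
    have e1 : ((j-1 : ℤ):ℝ) = (j:ℝ) - 1 := by push_cast; ring
    have e2 : (((j-1 : ℤ):ℝ)+1)*π = (j:ℝ)*π := by push_cast; ring
    have hlow : ((j:ℝ)-1)*π < (j:ℝ)*π := by nlinarith
    have hψp : HasDerivWithinAt ψ (gFun (-A) k (Bd (-A) k (a j) (Cpsi A k a j))
        (Cd (-A) k (a j) (Cpsi A k a j)) ((j:ℝ)*π - (j:ℝ)*π))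
        (Set.Ioi ((j:ℝ)*π)) ((j:ℝ)*π) := by
      refine ((hasDerivAt_psiRec A k a j _).hasDerivWithinAt).congr_of_eventuallyEq ?_ ?_
      · filter_upwards [nhdsWithin_le_nhds (Iio_mem_nhds (hlt j)), self_mem_nhdsWithin]
          with y h1 h2
        exact hψ j y ⟨le_of_lt h2, h1⟩
      · exact hψ j _ (hmem j)
    have hφp : HasDerivWithinAt φ (gFun A k (Bd A k (a j) (Cphi A k a j))
        (Cd A k (a j) (Cphi A k a j)) ((j:ℝ)*π - (j:ℝ)*π))
        (Set.Ioi ((j:ℝ)*π)) ((j:ℝ)*π) := by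
      refine ((hasDerivAt_phiRec A k a j _).hasDerivWithinAt).congr_of_eventuallyEq ?_ ?_
      · filter_upwards [nhdsWithin_le_nhds (Iio_mem_nhds (hlt j)), self_mem_nhdsWithin]
          with y h1 h2
        exact hφ j y ⟨le_of_lt h2, h1⟩
      · exact hφ j _ (hmem j)
    have hψm : HasDerivWithinAt ψ (gFun (-A) k (Bd (-A) k (a (j-1)) (Cpsi A k a (j-1)))
        (Cd (-A) k (a (j-1)) (Cpsi A k a (j-1))) ((j:ℝ)*π - ((j-1:ℤ):ℝ)*π))
        (Set.Iio ((j:ℝ)*π)) ((j:ℝ)*π) := by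
      refine ((hasDerivAt_psiRec A k a (j-1) _).hasDerivWithinAt).congr_of_eventuallyEq ?_ ?_
      · filter_upwards [nhdsWithin_le_nhds (Ioi_mem_nhds hlow), self_mem_nhdsWithin]
          with y h1 h2
        exact hψIcc (j-1) y (by rw [e1]; exact h1.le) (by rw [e2]; exact h2.le)
      · exact hψIcc (j-1) _ (by rw [e1]; nlinarith) (by rw [e2])
    have hφm : HasDerivWithinAt φ (gFun A k (Bd A k (a (j-1)) (Cphi A k a (j-1)))
        (Cd A k (a (j-1)) (Cphi A k a (j-1))) ((j:ℝ)*π - ((j-1:ℤ):ℝ)*π))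
        (Set.Iio ((j:ℝ)*π)) ((j:ℝ)*π) := by
      refine ((hasDerivAt_phiRec A k a (j-1) _).hasDerivWithinAt).congr_of_eventuallyEq ?_ ?_
      · filter_upwards [nhdsWithin_le_nhds (Ioi_mem_nhds hlow), self_mem_nhdsWithin]
          with y h1 h2
        exact hφIcc (j-1) y (by rw [e1]; exact h1.le) (by rw [e2]; exact h2.le)
      · exact hφIcc (j-1) _ (by rw [e1]; nlinarith) (by rw [e2])
    refine ⟨_, _, _, _, hψp, hψm, hφp, hφm, ?_⟩
    have hs' : ((Real.sin (k*π) : ℝ):ℂ) ≠ 0 := Complex.ofReal_ne_zero.2 hks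
    have hk' : ((k:ℝ):ℂ) ≠ 0 := Complex.ofReal_ne_zero.2 hk.ne'
    have hCA : ((Real.cos (A*π) : ℝ):ℂ) ≠ 0 := Complex.ofReal_ne_zero.2 hA
    have hEF : Complex.exp (Complex.I * ((A*π : ℝ):ℂ)) * Complex.exp (-(Complex.I) * ((A*π : ℝ):ℂ)) = 1 := by
      rw [← Complex.exp_add,
        show Complex.I * ((A*π:ℝ):ℂ) + -(Complex.I) * ((A*π:ℝ):ℂ) = 0 by ring, Complex.exp_zero]
    have hEcos : Complex.exp (Complex.I * ((A*π : ℝ):ℂ)) + Complex.exp (-(Complex.I) * ((A*π : ℝ):ℂ))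
        = 2 * ((Real.cos (A*π) : ℝ):ℂ) := by
      rw [show Complex.I * ((A*π:ℝ):ℂ) = ((A*π:ℝ):ℂ) * Complex.I by ring,
        show -(Complex.I) * ((A*π:ℝ):ℂ) = (-((A*π:ℝ):ℂ)) * Complex.I by ring,
        Complex.exp_mul_I, Complex.exp_mul_I, Complex.cos_neg, Complex.sin_neg,
        Complex.ofReal_cos]
      ring
    have htrig : ((Real.sin (k*π) :ℝ):ℂ)^2 + ((Real.cos (k*π):ℝ):ℂ)^2 = 1 := by
      norm_cast
      exact Real.sin_sq_add_cos_sq _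
    have h := ha j
    have hxi : (((1 / Real.cos (A * π))
          * (Real.cos (k * π) + α j / (4 * k) * Real.sin (k * π)) : ℝ) : ℂ)
        = (1/((Real.cos (A*π) : ℝ):ℂ)) * (((Real.cos (k*π):ℝ):ℂ)
            + ((α j :ℝ):ℂ)/(4*(k:ℂ)) * ((Real.sin (k*π):ℝ):ℂ)) := by
      push_cast; ring
    rw [hxi] at h
    have hrec : ((Real.cos (A*π) : ℝ):ℂ) * (a (j+1) + a (j-1)) * (2 * (k:ℂ))
        = (4 * (k:ℂ) * ((Real.cos (k*π):ℝ):ℂ) + ((α j:ℝ):ℂ) * ((Real.sin (k*π):ℝ):ℂ)) * a j := by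
      have hgen : ∀ (CA c s al kk : ℂ), CA ≠ 0 → kk ≠ 0 →
          a (j+1) + a (j-1) = 2 * (1/CA * (c + al/(4*kk) * s)) * a j →
          CA * (a (j+1) + a (j-1)) * (2*kk) = (4*kk*c + al*s) * a j := by
        intro CA c s al kk h1 h2 h3
        rw [h3]; field_simp; ring
      exact hgen _ _ _ _ _ hCA hk' h
    rw [sub_self, gFun_zero, gFun_zero,
      show (j:ℝ)*π - ((j-1:ℤ):ℝ)*π = π by push_cast; ring]
    unfold gFun Bd Cd Cpsi Cphi
    rw [show (j:ℤ) - 1 + 1 = j by ring]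
    simp only [Complex.ofReal_neg]
    rw [show Complex.I * -(A:ℂ) * ((π:ℝ):ℂ) = -(Complex.I) * ((A*π:ℝ):ℂ) by push_cast; ring,
      show Complex.I * (A:ℂ) * ((π:ℝ):ℂ) = Complex.I * ((A*π:ℝ):ℂ) by push_cast; ring,
      show Complex.cos ((k:ℂ) * ((π:ℝ):ℂ)) = ((Real.cos (k*π):ℝ):ℂ) by push_cast; ring,
      show Complex.sin ((k:ℂ) * ((π:ℝ):ℂ)) = ((Real.sin (k*π):ℝ):ℂ) by push_cast; ring]
    have hCp := div_mul_cancel₀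
      (a (j+1) * Complex.exp (Complex.I * ((A*π : ℝ):ℂ)) - a j * ((Real.cos (k*π):ℝ):ℂ)) hs'
    have hCq := div_mul_cancel₀
      (a (j+1) * Complex.exp (-(Complex.I) * ((A*π : ℝ):ℂ)) - a j * ((Real.cos (k*π):ℝ):ℂ)) hs'
    have hCpm := div_mul_cancel₀
      (a j * Complex.exp (Complex.I * ((A*π : ℝ):ℂ)) - a (j-1) * ((Real.cos (k*π):ℝ):ℂ)) hs'
    have hCqm := div_mul_cancel₀
      (a j * Complex.exp (-(Complex.I) * ((A*π : ℝ):ℂ)) - a (j-1) * ((Real.cos (k*π):ℝ):ℂ)) hs'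
    linear_combination delta_key Complex.I (A:ℂ) (k:ℂ) ((α j :ℝ):ℂ)
      (Complex.exp (Complex.I * ((A*π : ℝ):ℂ))) (Complex.exp (-(Complex.I) * ((A*π : ℝ):ℂ)))
      ((Real.cos (k*π):ℝ):ℂ) ((Real.sin (k*π):ℝ):ℂ) ((Real.cos (A*π) : ℝ):ℂ)
      (a j) (a (j+1)) (a (j-1)) _ _ _ _ hs' hEF hEcos htrig hCp hCq hCpm hCqm hrec
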